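/- Let G be a group, φ : G → G a group automorphism, and w ∈ G. If the family {φ^i(w) : i ∈ ℕ} is a basis of a free subgroup of G (i.e., the elements freely generate a free subgroup), then the family {φ^i(w) : i ∈ ℤ} is also a basis of a free subgroup of G. -/

import Mathlib

/-- if `{φ^i(w) : i ∈ ℕ}` is a basis of a free subgroup of `G`,
then `{φ^i(w) : i ∈ ℤ}` is a basis of a free subgroup of `G`. -/
theorem stmt_0 {G : Type*} [Group G] (φ : MulAut G) (w : G)
    (h : Function.Injective
      (FreeGroup.lift (fun i : ℕ => (φ ^ i) w) : FreeGroup ℕ →* G)) :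
    Function.Injective
      (FreeGroup.lift (fun i : ℤ => (φ ^ i) w) : FreeGroup ℤ →* G) := by
  -- monotonicity of ranges
  have mono : ∀ (n m : ℕ), n ≤ m → ∀ y : FreeGroup ℕ,
      FreeGroup.map (fun k : ℕ => (k : ℤ) - m) (FreeGroup.map (fun k : ℕ => k + (m - n)) y)
        = FreeGroup.map (fun k : ℕ => (k : ℤ) - n) y := by
    intro n m hnm y
    rw [FreeGroup.map.comp]
    have : ((fun k : ℕ => (k : ℤ) - m) ∘ fun k : ℕ => k + (m - n)) =
        fun k : ℕ => (k : ℤ) - n := by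
      funext k; simp only [Function.comp]; push_cast; omega
    rw [this]
  have key : ∀ x : FreeGroup ℤ, ∃ n : ℕ, ∃ y : FreeGroup ℕ,
      FreeGroup.map (fun k : ℕ => (k : ℤ) - n) y = x := by
    intro x
    induction x using FreeGroup.induction_on with
    | C1 => exact ⟨0, 1, by simp⟩
    | of i =>
      refine ⟨(-i).toNat, FreeGroup.of (i + (-i).toNat).toNat, ?_⟩
      rw [FreeGroup.map.of]
      congr 1
      omega
    | inv_of i ih =>
      obtain ⟨n, y, hy⟩ := ih
      exact ⟨n, y⁻¹, by simp [hy]⟩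
    | mul a b iha ihb =>
      obtain ⟨n, y, hy⟩ := iha
      obtain ⟨m, z, hz⟩ := ihb
      refine ⟨max n m, (FreeGroup.map (fun k : ℕ => k + (max n m - n)) y) *
        (FreeGroup.map (fun k : ℕ => k + (max n m - m)) z), ?_⟩
      rw [map_mul, mono n _ (le_max_left n m) y, mono m _ (le_max_right n m) z, hy, hz]
  rw [injective_iff_map_eq_one] at h ⊢
  intro x hx
  obtain ⟨n, y, hy⟩ := key x
  -- compute the lift on the image
  have comp1 : ∀ z : FreeGroup ℕ,
      (FreeGroup.lift (fun i : ℤ => (φ ^ i) w)) (FreeGroup.map (fun k : ℕ => (k : ℤ) - n) z)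
        = ((φ ^ (-(n : ℤ))).toMonoidHom.comp
            (FreeGroup.lift (fun i : ℕ => (φ ^ i) w))) z := by
    intro z
    induction z using FreeGroup.induction_on with
    | C1 => simp
    | of i =>
      rw [FreeGroup.map.of]
      simp only [FreeGroup.lift_apply_of, MonoidHom.comp_apply, MulEquiv.coe_toMonoidHom]
      rw [show ((i : ℤ) - n) = -(n : ℤ) + i by ring, zpow_add, zpow_natCast]
      rfl
    | inv_of i ih => simp only [map_inv, ih]
    | mul a b iha ihb => simp only [map_mul, iha, ihb]
  rw [← hy, comp1] at hx
  simp only [MonoidHom.comp_apply, MulEquiv.coe_toMonoidHom] at hx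
  have : (FreeGroup.lift (fun i : ℕ => (φ ^ i) w)) y = 1 := by
    have := congrArg (φ ^ (n : ℤ)) hx
    rw [← MulAut.mul_apply, ← zpow_add, add_neg_cancel, zpow_zero, MulAut.one_apply, map_one] at this
    exact this
  rw [← hy, h y this, map_one]
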